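/- Let d ≥ 1, let μ be the Haar probability measure on the unitary group U(d) = Matrix.unitaryGroup (Fin d) ℂ, let e ∈ ℂ^d be a unit vector (ℓ² norm), and write ξ_U := U *ᵥ e. Then for every d×d complex matrix O, ∫_{U(d)} ⟨ξ_U, O *ᵥ ξ_U⟩ dμ(U) = (Tr O) / d, where ⟨v, w⟩ := ∑_i conj(v i)·(w i). -/

import Mathlib

open MeasureTheory Matrix

/-- The standard inner product `⟨v, w⟩ = ∑ i, conj (v i) * w i` on `ℂ^d`. -/
noncomputable def cip {d : ℕ} (v w : Fin d → ℂ) : ℂ :=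
  ∑ i, (starRingEnd ℂ) (v i) * w i

section Aux

variable {d : ℕ}

lemma unitary_entry_norm_le (U : Matrix.unitaryGroup (Fin d) ℂ) (i j : Fin d) :
    ‖(U : Matrix (Fin d) (Fin d) ℂ) i j‖ ≤ 1 := by
  have h : (U : Matrix (Fin d) (Fin d) ℂ) * star (U : Matrix (Fin d) (Fin d) ℂ) = 1 :=
    Matrix.mem_unitaryGroup_iff.mp U.2
  have h1 : ∑ k, (U : Matrix (Fin d) (Fin d) ℂ) i k *
      (starRingEnd ℂ) ((U : Matrix (Fin d) (Fin d) ℂ) i k) = 1 := by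
    have h1' : ((U : Matrix (Fin d) (Fin d) ℂ) * star (U : Matrix (Fin d) (Fin d) ℂ)) i i
        = (1 : Matrix (Fin d) (Fin d) ℂ) i i := by rw [h]
    simpa [Matrix.mul_apply, Matrix.star_apply, Matrix.one_apply,
      Complex.star_def] using h1'
  have h2 : ∑ k, (Complex.normSq ((U : Matrix (Fin d) (Fin d) ℂ) i k) : ℂ) = 1 := by
    simpa [Complex.mul_conj] using h1
  have h2r : ∑ k, Complex.normSq ((U : Matrix (Fin d) (Fin d) ℂ) i k) = 1 := by
    exact_mod_cast h2
  have hle : Complex.normSq ((U : Matrix (Fin d) (Fin d) ℂ) i j) ≤ 1 := by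
    calc Complex.normSq ((U : Matrix (Fin d) (Fin d) ℂ) i j)
        ≤ ∑ k, Complex.normSq ((U : Matrix (Fin d) (Fin d) ℂ) i k) :=
          Finset.single_le_sum (fun k _ => Complex.normSq_nonneg _) (Finset.mem_univ j)
      _ = 1 := h2r
  have hsq : ‖(U : Matrix (Fin d) (Fin d) ℂ) i j‖ ^ 2
      = Complex.normSq ((U : Matrix (Fin d) (Fin d) ℂ) i j) := by
    rw [Complex.sq_norm]
  nlinarith [norm_nonneg ((U : Matrix (Fin d) (Fin d) ℂ) i j)]

instance : CompactSpace (Matrix.unitaryGroup (Fin d) ℂ) := by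
  have hK : IsCompact (Set.pi Set.univ fun _ : Fin d =>
      Set.pi Set.univ fun _ : Fin d => Metric.closedBall (0 : ℂ) 1) :=
    isCompact_univ_pi fun _ => isCompact_univ_pi fun _ => isCompact_closedBall 0 1
  have hc : IsCompact (Matrix.unitaryGroup (Fin d) ℂ : Set (Matrix (Fin d) (Fin d) ℂ)) := by
    refine hK.of_isClosed_subset ?_ ?_
    · have : (Matrix.unitaryGroup (Fin d) ℂ : Set (Matrix (Fin d) (Fin d) ℂ)) =
          {M | M * star M = 1} := by
        ext M; exact Matrix.mem_unitaryGroup_iff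
      rw [this]
      exact isClosed_eq (continuous_id.matrix_mul continuous_id.matrix_conjTranspose)
        continuous_const
    · intro M hM i _ j _
      simpa [Metric.mem_closedBall, dist_zero_right] using unitary_entry_norm_le ⟨M, hM⟩ i j
  exact isCompact_iff_compactSpace.mp hc

variable [MeasurableSpace (Matrix.unitaryGroup (Fin d) ℂ)]
  [BorelSpace (Matrix.unitaryGroup (Fin d) ℂ)]
  (μ : Measure (Matrix.unitaryGroup (Fin d) ℂ)) (e : Fin d → ℂ)

/-- The second-moment integrand. -/
noncomputable def fA (i j : Fin d) (U : Matrix.unitaryGroup (Fin d) ℂ) : ℂ :=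
  (starRingEnd ℂ) (((U : Matrix (Fin d) (Fin d) ℂ) *ᵥ e) i) *
    (((U : Matrix (Fin d) (Fin d) ℂ) *ᵥ e) j)

/-- The second-moment matrix. -/
noncomputable def mA (i j : Fin d) : ℂ := ∫ U, fA e i j U ∂μ

omit [MeasurableSpace (Matrix.unitaryGroup (Fin d) ℂ)]
  [BorelSpace (Matrix.unitaryGroup (Fin d) ℂ)] in
lemma cont_entry (i : Fin d) :
    Continuous fun U : Matrix.unitaryGroup (Fin d) ℂ =>
      ((U : Matrix (Fin d) (Fin d) ℂ) *ᵥ e) i := by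
  simp only [Matrix.mulVec, dotProduct]
  exact continuous_finset_sum _ fun k _ =>
    (show Continuous fun U : Matrix.unitaryGroup (Fin d) ℂ => (U : Matrix (Fin d) (Fin d) ℂ) i k from
      (((continuous_apply k).comp ((continuous_apply i).comp continuous_subtype_val)))).mul
      continuous_const

omit [MeasurableSpace (Matrix.unitaryGroup (Fin d) ℂ)]
  [BorelSpace (Matrix.unitaryGroup (Fin d) ℂ)] in
lemma cont_fA (i j : Fin d) : Continuous (fA e i j) :=
  (Complex.continuous_conj.comp (cont_entry e i)).mul (cont_entry e j)

lemma integrable_fA [IsFiniteMeasure μ] (i j : Fin d) : Integrable (fA e i j) μ :=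
  (cont_fA e i j).integrable_of_hasCompactSupport
    (IsCompact.of_isClosed_subset isCompact_univ (isClosed_tsupport _) (Set.subset_univ _))

end Aux

section Main

variable {d : ℕ} [MeasurableSpace (Matrix.unitaryGroup (Fin d) ℂ)]
  [BorelSpace (Matrix.unitaryGroup (Fin d) ℂ)]
  (μ : Measure (Matrix.unitaryGroup (Fin d) ℂ))
  [μ.IsHaarMeasure] [IsProbabilityMeasure μ] (e : Fin d → ℂ)

lemma mA_invariance (V : Matrix.unitaryGroup (Fin d) ℂ) (i j : Fin d) :
    mA μ e i j = ∑ k, ∑ l,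
      ((starRingEnd ℂ) ((V : Matrix (Fin d) (Fin d) ℂ) i k) *
        (V : Matrix (Fin d) (Fin d) ℂ) j l) * mA μ e k l := by
  have h0 : mA μ e i j = ∫ U, fA e i j (V * U) ∂μ :=
    (integral_mul_left_eq_self (fA e i j) V).symm
  have h1 : ∀ U : Matrix.unitaryGroup (Fin d) ℂ, fA e i j (V * U) =
      ∑ k, ∑ l, ((starRingEnd ℂ) ((V : Matrix (Fin d) (Fin d) ℂ) i k) *
        (V : Matrix (Fin d) (Fin d) ℂ) j l) * fA e k l U := by
    intro U
    have hco : ((V * U : Matrix.unitaryGroup (Fin d) ℂ) : Matrix (Fin d) (Fin d) ℂ) *ᵥ e =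
        (V : Matrix (Fin d) (Fin d) ℂ) *ᵥ ((U : Matrix (Fin d) (Fin d) ℂ) *ᵥ e) := by
      rw [Matrix.mulVec_mulVec]; rfl
    simp only [fA]
    rw [hco]
    rw [show ((V : Matrix (Fin d) (Fin d) ℂ) *ᵥ ((U : Matrix (Fin d) (Fin d) ℂ) *ᵥ e)) i
        = ∑ k, (V : Matrix (Fin d) (Fin d) ℂ) i k *
          ((U : Matrix (Fin d) (Fin d) ℂ) *ᵥ e) k from rfl]
    rw [show ((V : Matrix (Fin d) (Fin d) ℂ) *ᵥ ((U : Matrix (Fin d) (Fin d) ℂ) *ᵥ e)) j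
        = ∑ l, (V : Matrix (Fin d) (Fin d) ℂ) j l *
          ((U : Matrix (Fin d) (Fin d) ℂ) *ᵥ e) l from rfl]
    rw [map_sum, Finset.sum_mul_sum]
    refine Finset.sum_congr rfl fun k _ => Finset.sum_congr rfl fun l _ => ?_
    rw [_root_.map_mul]
    ring
  rw [h0]
  simp_rw [h1]
  rw [integral_finset_sum _ (fun k _ => integrable_finset_sum _
    (fun l _ => ((integrable_fA μ e k l).const_mul _)))]
  refine Finset.sum_congr rfl fun k _ => ?_
  rw [integral_finset_sum _ (fun l _ => ((integrable_fA μ e k l).const_mul _))]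
  refine Finset.sum_congr rfl fun l _ => ?_
  exact integral_const_mul _ _

lemma mA_offdiag (i j : Fin d) (hij : i ≠ j) : mA μ e i j = 0 := by
  set c : Fin d → ℂ := fun p => if p = i then -1 else 1 with hc
  have hV : Matrix.diagonal c ∈ Matrix.unitaryGroup (Fin d) ℂ := by
    rw [Matrix.mem_unitaryGroup_iff]
    have hstar : star (Matrix.diagonal c) = Matrix.diagonal (fun p => (starRingEnd ℂ) (c p)) := by
      ext p q
      by_cases h : p = q
      · subst h; simp [Matrix.star_apply, Matrix.diagonal_apply_eq, Complex.star_def]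
      · simp [Matrix.star_apply, Matrix.diagonal_apply_ne _ h,
          Matrix.diagonal_apply_ne _ (Ne.symm h)]
    rw [hstar, Matrix.diagonal_mul_diagonal]
    ext p q
    by_cases h : p = q
    · subst h
      by_cases hpi : p = i <;>
        simp [Matrix.diagonal_apply_eq, hc, hpi, Matrix.one_apply]
    · simp [Matrix.diagonal_apply_ne _ h, Matrix.one_apply, h]
  have key := mA_invariance μ e ⟨Matrix.diagonal c, hV⟩ i j
  have hcollapse : ∑ k, ∑ l,
      ((starRingEnd ℂ) ((Matrix.diagonal c) i k) * (Matrix.diagonal c) j l) * mA μ e k l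
      = (starRingEnd ℂ) (c i) * c j * mA μ e i j := by
    rw [Finset.sum_eq_single i]
    · rw [Finset.sum_eq_single j]
      · simp
      · intro l _ hl
        simp [Matrix.diagonal_apply_ne _ (Ne.symm hl)]
      · simp
    · intro k _ hk
      apply Finset.sum_eq_zero
      intro l _
      simp [Matrix.diagonal_apply_ne _ (Ne.symm hk)]
    · simp
  rw [hcollapse] at key
  have hci : c i = -1 := by simp [hc]
  have hcj : c j = 1 := by simp [hc, Ne.symm hij]
  rw [hci, hcj] at key
  simp only [map_neg, _root_.map_one, neg_mul, one_mul, mul_one] at key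
  linear_combination key / 2

lemma mA_diag_eq (i j : Fin d) : mA μ e i i = mA μ e j j := by
  by_cases hij : i = j
  · rw [hij]
  set σ := Equiv.swap i j with hσ
  set V : Matrix (Fin d) (Fin d) ℂ := Matrix.of (fun p q => if σ q = p then 1 else 0) with hVdef
  have hVentry : ∀ p q, V p q = if q = σ.symm p then (1 : ℂ) else 0 := by
    intro p q
    by_cases h : q = σ.symm p
    · rw [h]
      simp [hVdef]
    · have hne : σ q ≠ p := fun hh => h (by rw [← hh, Equiv.symm_apply_apply])
      simp [hVdef, hne, h]
  have hV : V ∈ Matrix.unitaryGroup (Fin d) ℂ := by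
    rw [Matrix.mem_unitaryGroup_iff]
    ext p q
    simp only [Matrix.mul_apply, Matrix.star_apply]
    have hterm : ∀ k, V p k * star (V q k) =
        if k = σ.symm p then (if k = σ.symm q then 1 else 0) else 0 := by
      intro k
      rw [hVentry p k, hVentry q k]
      by_cases h1 : k = σ.symm p <;> by_cases h2 : k = σ.symm q <;> simp [h1, h2]
    simp_rw [hterm]
    rw [Finset.sum_ite_eq' Finset.univ (σ.symm p)]
    simp only [Finset.mem_univ, if_true]
    by_cases hpq : p = q
    · simp [hpq, Matrix.one_apply]
    · have hne : σ.symm p ≠ σ.symm q := fun h => hpq (σ.symm.injective h)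
      simp [hne, Matrix.one_apply, hpq]
  have key := mA_invariance μ e ⟨V, hV⟩ i i
  have hcollapse : ∑ k, ∑ l, ((starRingEnd ℂ) (V i k) * V i l) * mA μ e k l
      = mA μ e (σ.symm i) (σ.symm i) := by
    rw [Finset.sum_eq_single (σ.symm i)]
    · rw [Finset.sum_eq_single (σ.symm i)]
      · simp [hVentry]
      · intro l _ hl; simp [hVentry, hl]
      · simp
    · intro k _ hk
      apply Finset.sum_eq_zero
      intro l _
      simp [hVentry, hk]
    · simp
  rw [hcollapse] at key
  have hsymm : σ.symm i = j := by
    rw [hσ, Equiv.symm_swap, Equiv.swap_apply_left]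
  rw [hsymm] at key
  exact key

lemma mA_trace (he : ∑ i, ‖e i‖ ^ 2 = 1) : ∑ i, mA μ e i i = 1 := by
  have hsum : ∀ U : Matrix.unitaryGroup (Fin d) ℂ, ∑ i, fA e i i U = 1 := by
    intro U
    have hU : star (U : Matrix (Fin d) (Fin d) ℂ) * (U : Matrix (Fin d) (Fin d) ℂ) = 1 :=
      Matrix.mem_unitaryGroup_iff'.mp U.2
    have h1 : ∑ i, fA e i i U =
        star ((U : Matrix (Fin d) (Fin d) ℂ) *ᵥ e) ⬝ᵥ ((U : Matrix (Fin d) (Fin d) ℂ) *ᵥ e) := by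
      simp [fA, dotProduct, Pi.star_apply, Complex.star_def]
    rw [h1, Matrix.star_mulVec, Matrix.dotProduct_mulVec, Matrix.vecMul_vecMul]
    rw [show ((U : Matrix (Fin d) (Fin d) ℂ))ᴴ = star ((U : Matrix (Fin d) (Fin d) ℂ)) from rfl,
      hU, Matrix.vecMul_one]
    have h2 : star e ⬝ᵥ e = ∑ i, (Complex.normSq (e i) : ℂ) := by
      simp [dotProduct, Pi.star_apply, Complex.star_def, mul_comm, Complex.mul_conj]
    rw [h2]
    have h3 : ∑ i, (Complex.normSq (e i) : ℂ) = ((∑ i, ‖e i‖ ^ 2 : ℝ) : ℂ) := by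
      norm_cast
      refine Finset.sum_congr rfl fun i _ => ?_
      rw [Complex.normSq_eq_norm_sq]
    rw [h3, he, Complex.ofReal_one]
  have : ∑ i, mA μ e i i = ∫ U, (∑ i, fA e i i U) ∂μ := by
    rw [integral_finset_sum _ (fun i _ => integrable_fA μ e i i)]
    rfl
  rw [this]
  simp_rw [hsum]
  simp

lemma mA_diag (hd : 1 ≤ d) (he : ∑ i, ‖e i‖ ^ 2 = 1) (i : Fin d) :
    mA μ e i i = 1 / (d : ℂ) := by
  have htr := mA_trace μ e he
  have hall : ∀ j : Fin d, mA μ e j j = mA μ e i i := fun j => mA_diag_eq μ e j i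
  rw [Finset.sum_congr rfl (fun j _ => hall j), Finset.sum_const, Finset.card_univ,
    Fintype.card_fin, nsmul_eq_mul] at htr
  have hd0 : (d : ℂ) ≠ 0 := by
    exact_mod_cast Nat.cast_ne_zero.mpr (by omega)
  field_simp
  linear_combination htr

end Main

/-- First-moment identity for Haar-random states (Appendix C of the paper):
`E[⟨ξ, O ξ⟩] = Tr O / d` where `ξ = U *ᵥ e` for Haar-random `U ∈ U(d)`. -/
theorem stmt10 (d : ℕ) (hd : 1 ≤ d)
    [MeasurableSpace (Matrix.unitaryGroup (Fin d) ℂ)]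
    [BorelSpace (Matrix.unitaryGroup (Fin d) ℂ)]
    (μ : Measure (Matrix.unitaryGroup (Fin d) ℂ))
    [μ.IsHaarMeasure] [IsProbabilityMeasure μ]
    (e : Fin d → ℂ) (he : ∑ i, ‖e i‖ ^ 2 = 1)
    (O : Matrix (Fin d) (Fin d) ℂ) :
    ∫ U : Matrix.unitaryGroup (Fin d) ℂ,
        cip ((U : Matrix (Fin d) (Fin d) ℂ) *ᵥ e)
          (O *ᵥ ((U : Matrix (Fin d) (Fin d) ℂ) *ᵥ e)) ∂μ
      = O.trace / (d : ℂ) := by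
  have h1 : ∀ U : Matrix.unitaryGroup (Fin d) ℂ,
      cip ((U : Matrix (Fin d) (Fin d) ℂ) *ᵥ e)
        (O *ᵥ ((U : Matrix (Fin d) (Fin d) ℂ) *ᵥ e)) = ∑ i, ∑ j, O i j * fA e i j U := by
    intro U
    simp only [cip, fA]
    refine Finset.sum_congr rfl fun i _ => ?_
    rw [show (O *ᵥ ((U : Matrix (Fin d) (Fin d) ℂ) *ᵥ e)) i
        = ∑ j, O i j * ((U : Matrix (Fin d) (Fin d) ℂ) *ᵥ e) j from rfl, Finset.mul_sum]
    refine Finset.sum_congr rfl fun j _ => ?_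
    ring
  simp_rw [h1]
  rw [integral_finset_sum _ (fun i _ => integrable_finset_sum _
    (fun j _ => (integrable_fA μ e i j).const_mul (O i j)))]
  have h2 : ∀ i : Fin d, (∫ U, (∑ j, O i j * fA e i j U) ∂μ) = O i i * (1 / (d : ℂ)) := by
    intro i
    rw [integral_finset_sum _ (fun j _ => (integrable_fA μ e i j).const_mul _)]
    have h3 : ∀ j : Fin d, (∫ U, O i j * fA e i j U ∂μ) = O i j * mA μ e i j := fun j =>
      integral_const_mul _ _
    simp_rw [h3]
    rw [Finset.sum_eq_single i]
    · rw [mA_diag μ e hd he i]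
    · intro j _ hj
      rw [mA_offdiag μ e i j (Ne.symm hj), mul_zero]
    · simp
  simp_rw [h2]
  rw [← Finset.sum_mul, Matrix.trace]
  simp [Matrix.diag, div_eq_mul_inv, Finset.sum_mul]
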